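/- Let C(G) = 2·[E_{x∼P}[log D*(x)] + E_{x∼Q}[log(1−D*(x))]] where D*(x) = (p_data(x)+(β/2)p_duel(x))/(p_data(x)+p_g(x)+β·p_duel(x)), P ∝ p_data + (β/2)p_duel, Q ∝ p_g + (β/2)p_duel. Then C(G) ≥ −log 16, with equality if and only if p_data = p_g almost everywhere. -/

import Mathlib

open MeasureTheory Real

lemma aux_log (u v : ℝ) (hu : 0 ≤ u) (hv : 0 < v) :
    u - v ≤ u * Real.log (u / v) ∧ (u * Real.log (u / v) = u - v ↔ u = v) := by
  rcases hu.eq_or_lt with h | h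
  · simp only [← h, zero_mul, zero_sub]
    constructor
    · linarith
    · constructor <;> intro hh <;> [linarith; linarith]
  · have h1 : Real.log (v / u) ≤ v / u - 1 := Real.log_le_sub_one_of_pos (by positivity)
    have hlog : Real.log (u / v) = - Real.log (v / u) := by
      rw [← Real.log_inv, inv_div]
    constructor
    · rw [hlog]
      have : u * Real.log (v / u) ≤ u * (v / u - 1) := by nlinarith
      have hvu : u * (v / u) = v := by field_simp
      nlinarith
    · constructor
      · intro heq
        by_contra hne
        have hne1 : v / u ≠ 1 := by
          intro hc
          apply hne
          field_simp at hc
          linarith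
        have h2 : Real.log (v / u) < v / u - 1 :=
          Real.log_lt_sub_one_of_pos (by positivity) hne1
        have hvu : u * (v / u) = v := by field_simp
        rw [hlog] at heq
        nlinarith
      · intro heq
        subst heq
        rw [div_self h.ne', Real.log_one]
        ring

lemma two_point (a b : ℝ) (ha : 0 ≤ a) (hb : 0 ≤ b) :
    -((a + b) * Real.log 2) ≤ a * Real.log (a / (a + b)) + b * Real.log (b / (a + b)) ∧
    (a * Real.log (a / (a + b)) + b * Real.log (b / (a + b)) = -((a + b) * Real.log 2)
      ↔ a = b) := by
  rcases (add_nonneg ha hb).eq_or_lt with h | h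
  · have ha0 : a = 0 := by linarith
    have hb0 : b = 0 := by linarith
    simp [ha0, hb0]
  · set s := a + b with hs
    have hhalf : (0:ℝ) < s / 2 := by linarith
    have ident : ∀ u : ℝ, 0 ≤ u →
        u * Real.log (u / s) = u * Real.log (u / (s / 2)) - u * Real.log 2 := by
      intro u hu
      rcases hu.eq_or_lt with h0 | h0
      · simp [← h0]
      · have : u / (s / 2) = (u / s) * 2 := by field_simp
        rw [this, Real.log_mul (by positivity) two_ne_zero]
        ring
    obtain ⟨ea1, ea2⟩ := aux_log a (s / 2) ha hhalf
    obtain ⟨eb1, eb2⟩ := aux_log b (s / 2) hb hhalf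
    have ia := ident a ha
    have ib := ident b hb
    constructor
    · rw [ia, ib]; linarith
    · rw [ia, ib]
      constructor
      · intro heq
        have t1 : a * Real.log (a / (s / 2)) = a - s / 2 := by linarith
        have t2 : b * Real.log (b / (s / 2)) = b - s / 2 := by linarith
        have := ea2.mp t1
        have := eb2.mp t2
        linarith
      · intro heq
        have hs2 : s / 2 = a := by rw [hs]; linarith
        have t1 : a * Real.log (a / (s / 2)) = a - s / 2 := ea2.mpr hs2.symm
        have t2 : b * Real.log (b / (s / 2)) = b - s / 2 := eb2.mpr (by linarith)
        linarith

/-- Theorem 1 (DuelGAN). With `p_duel = (p_data+p_g)/2`,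
`D*(x) = (p_data(x)+(β/2)p_duel(x))/(p_data(x)+p_g(x)+β·p_duel(x))`,
`P ∝ p_data + (β/2)p_duel` and `Q ∝ p_g + (β/2)p_duel` (normalized by `1+β/2`),
the criterion `C(G) = 2·[E_{x∼P}[log D*(x)] + E_{x∼Q}[log(1-D*(x))]]` satisfies
`C(G) ≥ -log 16`, with equality iff `p_data = p_g` almost everywhere. -/
theorem duelgan_global_minimum
    {X : Type*} [MeasurableSpace X] (μ : Measure X)
    (pdata pg : X → ℝ) (β : ℝ) (hβ : β ∈ Set.Icc (0:ℝ) 1)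
    (hpm : Measurable pdata) (hqm : Measurable pg)
    (hp0 : ∀ x, 0 ≤ pdata x) (hq0 : ∀ x, 0 ≤ pg x)
    (hpI : ∫ x, pdata x ∂μ = 1) (hqI : ∫ x, pg x ∂μ = 1)
    (pduel P Q Dstar : X → ℝ)
    (hpduel : ∀ x, pduel x = (pdata x + pg x) / 2)
    (hP : ∀ x, P x = (pdata x + β / 2 * pduel x) / (1 + β / 2))
    (hQ : ∀ x, Q x = (pg x + β / 2 * pduel x) / (1 + β / 2))
    (hD : ∀ x, Dstar x =
      (pdata x + β / 2 * pduel x) / (pdata x + pg x + β * pduel x))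
    (hInt1 : Integrable (fun x => P x * Real.log (Dstar x)) μ)
    (hInt2 : Integrable (fun x => Q x * Real.log (1 - Dstar x)) μ) :
    -Real.log 16 ≤
      2 * ((∫ x, P x * Real.log (Dstar x) ∂μ) + ∫ x, Q x * Real.log (1 - Dstar x) ∂μ) ∧
    (2 * ((∫ x, P x * Real.log (Dstar x) ∂μ) + ∫ x, Q x * Real.log (1 - Dstar x) ∂μ)
        = -Real.log 16 ↔ pdata =ᵐ[μ] pg) := by
  obtain ⟨hβ0, hβ1⟩ := hβ
  have hc : (0:ℝ) < 1 + β / 2 := by linarith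
  -- pointwise facts
  have hPQ : ∀ x, P x + Q x = pdata x + pg x := by
    intro x
    rw [hP, hQ, hpduel]
    field_simp
    ring
  have hP0 : ∀ x, 0 ≤ P x := by
    intro x
    rw [hP, hpduel]
    have := hp0 x; have := hq0 x
    have hd2 : 0 ≤ β / 2 * ((pdata x + pg x) / 2) := by positivity
    positivity
  have hQ0 : ∀ x, 0 ≤ Q x := by
    intro x
    rw [hQ, hpduel]
    have := hp0 x; have := hq0 x
    positivity
  have hPeqQ : ∀ x, P x = Q x ↔ pdata x = pg x := by
    intro x
    rw [hP, hQ, div_eq_div_iff hc.ne' hc.ne']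
    constructor
    · intro h
      have := mul_right_cancel₀ hc.ne' h
      linarith
    · intro h; rw [h]
  -- rewrite the integrand
  have hrw : ∀ x, P x * Real.log (Dstar x) + Q x * Real.log (1 - Dstar x)
      = P x * Real.log (P x / (P x + Q x)) + Q x * Real.log (Q x / (P x + Q x)) := by
    intro x
    rcases eq_or_lt_of_le (add_nonneg (hp0 x) (hq0 x)) with h0 | h0
    · have hpx : pdata x = 0 := by have := hp0 x; have := hq0 x; linarith
      have hqx : pg x = 0 := by have := hp0 x; have := hq0 x; linarith
      have hdx : pduel x = 0 := by rw [hpduel, hpx, hqx]; norm_num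
      have hPx : P x = 0 := by rw [hP, hpx, hdx]; simp
      have hQx : Q x = 0 := by rw [hQ, hqx, hdx]; simp
      simp [hPx, hQx]
    · have hden : pdata x + pg x + β * pduel x = (P x + Q x) * (1 + β / 2) := by
        rw [hPQ, hpduel]; ring
      have hnum : pdata x + β / 2 * pduel x = P x * (1 + β / 2) := by
        rw [hP]; field_simp
      have hPQpos : 0 < P x + Q x := by rw [hPQ]; exact h0
      have hDx : Dstar x = P x / (P x + Q x) := by
        rw [hD, hden, hnum, mul_div_mul_right _ _ hc.ne']
      have hDx2 : 1 - Dstar x = Q x / (P x + Q x) := by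
        rw [hDx]
        field_simp
        ring
      rw [hDx2, hDx]
  -- key pointwise inequality + equality characterization
  have hkey : ∀ x,
      -((P x + Q x) * Real.log 2) ≤
        P x * Real.log (Dstar x) + Q x * Real.log (1 - Dstar x) ∧
      (P x * Real.log (Dstar x) + Q x * Real.log (1 - Dstar x)
          = -((P x + Q x) * Real.log 2) ↔ pdata x = pg x) := by
    intro x
    obtain ⟨h1, h2⟩ := two_point (P x) (Q x) (hP0 x) (hQ0 x)
    rw [hrw x]
    exact ⟨h1, h2.trans (hPeqQ x)⟩
  -- integrability of the densities
  have hpint : Integrable pdata μ := by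
    by_contra h
    rw [integral_undef h] at hpI
    norm_num at hpI
  have hqint : Integrable pg μ := by
    by_contra h
    rw [integral_undef h] at hqI
    norm_num at hqI
  have hPQint : Integrable (fun x => P x + Q x) μ := by
    have : (fun x => P x + Q x) = fun x => pdata x + pg x := funext hPQ
    rw [this]
    exact hpint.add hqint
  have hPQI : ∫ x, (P x + Q x) ∂μ = 2 := by
    have : (fun x => P x + Q x) = fun x => pdata x + pg x := funext hPQ
    rw [this, integral_add hpint hqint, hpI, hqI]
    norm_num
  -- the lower bound integral
  have hlow : Integrable (fun x => -((P x + Q x) * Real.log 2)) μ :=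
    (hPQint.mul_const (Real.log 2)).neg
  have hlowI : ∫ x, -((P x + Q x) * Real.log 2) ∂μ = -(2 * Real.log 2) := by
    rw [integral_neg, integral_mul_const, hPQI]
  have hmono : ∫ x, -((P x + Q x) * Real.log 2) ∂μ ≤
      ∫ x, (P x * Real.log (Dstar x) + Q x * Real.log (1 - Dstar x)) ∂μ :=
    integral_mono hlow (hInt1.add hInt2) fun x => (hkey x).1
  have hsplit : ∫ x, (P x * Real.log (Dstar x) + Q x * Real.log (1 - Dstar x)) ∂μ
      = (∫ x, P x * Real.log (Dstar x) ∂μ) + ∫ x, Q x * Real.log (1 - Dstar x) ∂μ :=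
    integral_add hInt1 hInt2
  have h16 : Real.log 16 = 4 * Real.log 2 := by
    have : (16:ℝ) = 2 ^ 4 := by norm_num
    rw [this, Real.log_pow]
    push_cast
    ring
  rw [hlowI, hsplit] at hmono
  constructor
  · rw [h16]; linarith
  · -- equality case
    set I := (∫ x, P x * Real.log (Dstar x) ∂μ) + ∫ x, Q x * Real.log (1 - Dstar x) ∂μ
      with hI
    -- g := integrand - lower bound, nonneg
    set g : X → ℝ := fun x =>
      P x * Real.log (Dstar x) + Q x * Real.log (1 - Dstar x)
        + (P x + Q x) * Real.log 2 with hg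
    have hg0 : ∀ x, 0 ≤ g x := fun x => by
      have := (hkey x).1; simp only [hg]; linarith
    have hgint : Integrable g μ :=
      (hInt1.add hInt2).add (hPQint.mul_const (Real.log 2))
    have hsum : Integrable
        (fun x => P x * Real.log (Dstar x) + Q x * Real.log (1 - Dstar x)) μ :=
      hInt1.add hInt2
    have hgI : ∫ x, g x ∂μ = I + 2 * Real.log 2 := by
      have := integral_add hsum (hPQint.mul_const (Real.log 2))
      rw [hg]
      simp only
      rw [this, integral_mul_const, hPQI, hsplit]
    have hzero : (∫ x, g x ∂μ = 0) ↔ g =ᵐ[μ] 0 :=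
      integral_eq_zero_iff_of_nonneg hg0 hgint
    have hgiff : ∀ x, g x = 0 ↔ pdata x = pg x := by
      intro x
      have hgx : g x = P x * Real.log (Dstar x) + Q x * Real.log (1 - Dstar x)
          + (P x + Q x) * Real.log 2 := rfl
      rw [hgx, ← (hkey x).2]
      constructor <;> intro h <;> linarith
    constructor
    · intro heq
      have hI0 : ∫ x, g x ∂μ = 0 := by
        rw [hgI]
        rw [h16] at heq
        linarith
      have := hzero.mp hI0
      filter_upwards [this] with x hx
      exact (hgiff x).mp hx
    · intro heq
      have : g =ᵐ[μ] 0 := by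
        filter_upwards [heq] with x hx
        exact (hgiff x).mpr hx
      have hI0 := hzero.mpr this
      rw [hgI] at hI0
      rw [h16]
      linarith
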